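/- Let t > 0, y > t and F(x) = |x| + (x − y)²/(2t). Then lim_{T→0⁺} (1/√T) · (∫_ℝ (x − (y − t))·exp(−F(x)/T) dx) / (∫_ℝ exp(−F(x)/T) dx) = 0, and lim_{T→0⁺} (1/T) · (∫_ℝ (x − (y − t))²·exp(−F(x)/T) dx) / (∫_ℝ exp(−F(x)/T) dx) = t. That is, as an estimator of soft(y,t) = y − t, the random variable X_T(y,t) has asymptotically zero bias at scale √T and mean square error asymptotically equal to T·t. -/

import Mathlib

open Filter MeasureTheory

lemma integrable_sq_gauss {b : ℝ} (hb : 0 < b) :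
    Integrable (fun x : ℝ => x ^ 2 * Real.exp (-b * x ^ 2)) := by
  have := integrable_rpow_mul_exp_neg_mul_sq hb (by norm_num : (-1 : ℝ) < 2)
  have h : ∀ x : ℝ, x ^ (2 : ℝ) = x ^ (2 : ℕ) := fun x => by
    rw [← Real.rpow_natCast x 2]; norm_num
  simpa [h] using this

lemma integral_sq_gauss {b : ℝ} (hb : 0 < b) :
    ∫ x : ℝ, x ^ 2 * Real.exp (-b * x ^ 2) = (2 * b)⁻¹ * ∫ x : ℝ, Real.exp (-b * x ^ 2) := by
  have hb' : (2 : ℝ) * b ≠ 0 := by positivity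
  have hv : ∀ x : ℝ, HasDerivAt (fun x : ℝ => -(2 * b)⁻¹ * Real.exp (-b * x ^ 2))
      (x * Real.exp (-b * x ^ 2)) x := by
    intro x
    have h1 : HasDerivAt (fun x : ℝ => -b * x ^ 2) (-b * (2 * x)) x := by
      simpa using ((hasDerivAt_pow 2 x).const_mul (-b))
    have h2 := (h1.exp).const_mul (-(2 * b)⁻¹)
    refine h2.congr_deriv ?_
    linear_combination (x * Real.exp (-b * x ^ 2)) * mul_inv_cancel₀ hb.ne'
  have hu : ∀ x : ℝ, HasDerivAt (fun x : ℝ => x) (1 : ℝ) x := fun x => hasDerivAt_id x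
  have hI2 : Integrable (fun x : ℝ => x * Real.exp (-b * x ^ 2)) :=
    integrable_mul_exp_neg_mul_sq hb
  have hI3 : Integrable (fun x : ℝ => Real.exp (-b * x ^ 2)) := integrable_exp_neg_mul_sq hb
  have key := MeasureTheory.integral_mul_deriv_eq_deriv_mul_of_integrable (fun x _ => hu x) (fun x _ => hv x)
    (by simpa [Pi.mul_def, sq, mul_assoc] using integrable_sq_gauss hb)
    (by simpa [Pi.mul_def] using hI3.const_mul (-(2 * b)⁻¹))
    (by simpa [Pi.mul_def, mul_comm, mul_left_comm] using hI2.const_mul (-(2 * b)⁻¹))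
  simp only [one_mul] at key
  rw [show (fun x : ℝ => x ^ 2 * Real.exp (-b * x ^ 2))
      = fun x : ℝ => x * (x * Real.exp (-b * x ^ 2)) from by funext x; ring]
  rw [key, MeasureTheory.integral_const_mul]
  ring

lemma integral_odd_gauss (b : ℝ) : ∫ x : ℝ, x * Real.exp (-b * x ^ 2) = 0 := by
  have h := MeasureTheory.integral_neg_eq_self (fun x : ℝ => x * Real.exp (-b * x ^ 2))
    (volume : Measure ℝ)
  simp only [neg_sq, neg_mul, integral_neg, neg_mul] at h ⊢
  linarith [h]

/-- The one-dimensional objective `F(x) = |x| + (x − y)²/(2t)`. -/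
noncomputable def obj1 (y t x : ℝ) : ℝ := |x| + (x - y) ^ 2 / (2 * t)

lemma abs_eq_add_max (z : ℝ) : |z| = z + 2 * max 0 (-z) := by
  rcases le_total 0 z with h | h
  · rw [abs_of_nonneg h, max_eq_left (by linarith)]; ring
  · rw [abs_of_nonpos h, max_eq_right (by linarith)]; ring

lemma obj1_shift {t y : ℝ} (ht : 0 < t) (hty : t ≤ y) (s u : ℝ) :
    obj1 y t (y - t + s * u)
      = obj1 y t (y - t) + s ^ 2 * u ^ 2 / (2 * t) + 2 * max 0 (-(y - t + s * u)) := by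
  unfold obj1
  rw [abs_eq_add_max, abs_eq_add_max (y - t),
    show max 0 (-(y - t)) = 0 from max_eq_left (by linarith)]
  have ht' : (2 : ℝ) * t ≠ 0 := by positivity
  field_simp
  ring

lemma int_shift (f : ℝ → ℝ) (c : ℝ) {s : ℝ} (hs : 0 < s) :
    ∫ x : ℝ, f x = s * ∫ u : ℝ, f (c + s * u) := by
  rw [MeasureTheory.Measure.integral_comp_mul_left (fun v => f (c + v)) s]
  rw [MeasureTheory.integral_add_left_eq_self]
  rw [abs_of_pos (inv_pos.mpr hs), smul_eq_mul, ← mul_assoc, mul_inv_cancel₀ hs.ne', one_mul]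

lemma key_eq {t y : ℝ} (ht : 0 < t) (hty : t ≤ y) (k : ℕ) {T : ℝ} (hT : 0 < T) :
    ∫ x : ℝ, (x - (y - t)) ^ k * Real.exp (-(obj1 y t x) / T)
      = Real.sqrt T ^ (k + 1) * Real.exp (-(obj1 y t (y - t)) / T) *
        ∫ u : ℝ, u ^ k *
          Real.exp (-((2 * t)⁻¹ * u ^ 2) - 2 * max 0 (-(y - t + Real.sqrt T * u)) / T) := by
  have hs : 0 < Real.sqrt T := Real.sqrt_pos.mpr hT
  have hs2 : Real.sqrt T ^ 2 = T := Real.sq_sqrt hT.le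
  rw [int_shift (fun x => (x - (y - t)) ^ k * Real.exp (-(obj1 y t x) / T)) (y - t) hs]
  have hpt : ∀ u : ℝ,
      (y - t + Real.sqrt T * u - (y - t)) ^ k * Real.exp (-(obj1 y t (y - t + Real.sqrt T * u)) / T)
      = Real.sqrt T ^ k * Real.exp (-(obj1 y t (y - t)) / T) *
        (u ^ k * Real.exp (-((2 * t)⁻¹ * u ^ 2)
          - 2 * max 0 (-(y - t + Real.sqrt T * u)) / T)) := by
    intro u
    rw [obj1_shift ht hty (Real.sqrt T) u]
    have harg : -(obj1 y t (y - t) + Real.sqrt T ^ 2 * u ^ 2 / (2 * t)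
          + 2 * max 0 (-(y - t + Real.sqrt T * u))) / T
        = -(obj1 y t (y - t)) / T + (-((2 * t)⁻¹ * u ^ 2)
          - 2 * max 0 (-(y - t + Real.sqrt T * u)) / T) := by
      rw [hs2]
      field_simp
      ring
    rw [harg, Real.exp_add]
    have : y - t + Real.sqrt T * u - (y - t) = Real.sqrt T * u := by ring
    rw [this, mul_pow]
    ring
  simp_rw [hpt]
  rw [MeasureTheory.integral_const_mul]
  rw [pow_succ]
  ring

lemma J_tendsto {t y : ℝ} (ht : 0 < t) (hty : t < y) (k : ℕ)
    (hbd : Integrable (fun u : ℝ => |u| ^ k * Real.exp (-(2 * t)⁻¹ * u ^ 2))) :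
    Tendsto (fun T : ℝ => ∫ u : ℝ, u ^ k *
        Real.exp (-((2 * t)⁻¹ * u ^ 2) - 2 * max 0 (-(y - t + Real.sqrt T * u)) / T))
      (nhdsWithin 0 (Set.Ioi 0))
      (nhds (∫ u : ℝ, u ^ k * Real.exp (-(2 * t)⁻¹ * u ^ 2))) := by
  apply MeasureTheory.tendsto_integral_filter_of_dominated_convergence
    (fun u : ℝ => |u| ^ k * Real.exp (-(2 * t)⁻¹ * u ^ 2))
  · filter_upwards with T
    apply Continuous.aestronglyMeasurable
    apply Continuous.mul (by fun_prop)
    apply Real.continuous_exp.comp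
    apply Continuous.sub (by fun_prop)
    apply Continuous.div_const
    exact continuous_const.mul (continuous_const.max (by fun_prop))
  · filter_upwards [self_mem_nhdsWithin] with T (hT : 0 < T)
    filter_upwards with u
    rw [Real.norm_eq_abs, abs_mul, abs_pow, abs_of_pos (Real.exp_pos _)]
    apply mul_le_mul_of_nonneg_left _ (by positivity)
    apply Real.exp_le_exp.mpr
    have h1 : 0 ≤ 2 * max 0 (-(y - t + Real.sqrt T * u)) / T := by positivity
    nlinarith
  · exact hbd
  · filter_upwards with u
    apply Tendsto.congr' _ tendsto_const_nhds
    have hlim : Tendsto (fun T : ℝ => y - t + Real.sqrt T * u)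
        (nhdsWithin 0 (Set.Ioi 0)) (nhds (y - t)) := by
      have : Tendsto (fun T : ℝ => y - t + Real.sqrt T * u) (nhds 0)
          (nhds (y - t + Real.sqrt 0 * u)) :=
        tendsto_const_nhds.add ((Real.continuous_sqrt.tendsto 0).mul tendsto_const_nhds)
      simpa using this.mono_left nhdsWithin_le_nhds
    filter_upwards [hlim.eventually (eventually_gt_nhds (by linarith : (0:ℝ) < y - t))]
      with T hpos
    rw [show max 0 (-(y - t + Real.sqrt T * u)) = 0 from max_eq_left (by linarith)]
    norm_num

/-- For `y > t`, as an estimator of `soft(y,t) = y − t`, the random variable `X_T(y,t)`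
has asymptotically zero bias at scale `√T` and mean square error asymptotically `T·t`. -/
theorem stmt19 (t y : ℝ) (ht : 0 < t) (hyt : t < y) :
    Tendsto
      (fun T : ℝ =>
        1 / Real.sqrt T * ((∫ x : ℝ, (x - (y - t)) * Real.exp (-(obj1 y t x) / T)) /
          ∫ x : ℝ, Real.exp (-(obj1 y t x) / T)))
      (nhdsWithin 0 (Set.Ioi 0)) (nhds 0) ∧
    Tendsto
      (fun T : ℝ =>
        1 / T * ((∫ x : ℝ, (x - (y - t)) ^ 2 * Real.exp (-(obj1 y t x) / T)) /
          ∫ x : ℝ, Real.exp (-(obj1 y t x) / T)))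
      (nhdsWithin 0 (Set.Ioi 0)) (nhds t) := by
  have hb : (0 : ℝ) < (2 * t)⁻¹ := by positivity
  set b : ℝ := (2 * t)⁻¹ with hbdef
  -- the three limiting Gaussian moments
  set L0 : ℝ := ∫ u : ℝ, Real.exp (-b * u ^ 2) with hL0def
  have hL0pos : 0 < L0 := by
    rw [hL0def, integral_gaussian]
    have : 0 < Real.pi / b := by positivity
    exact Real.sqrt_pos.mpr this
  have hbd0 : Integrable (fun u : ℝ => |u| ^ 0 * Real.exp (-b * u ^ 2)) := by
    simpa using integrable_exp_neg_mul_sq hb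
  have hbd1 : Integrable (fun u : ℝ => |u| ^ 1 * Real.exp (-b * u ^ 2)) := by
    have := (integrable_mul_exp_neg_mul_sq hb).abs
    simpa [abs_mul, abs_of_pos (Real.exp_pos _)] using this
  have hbd2 : Integrable (fun u : ℝ => |u| ^ 2 * Real.exp (-b * u ^ 2)) := by
    simpa [sq_abs] using integrable_sq_gauss hb
  have hJ0 := J_tendsto ht hyt 0 hbd0
  have hJ1 := J_tendsto ht hyt 1 hbd1
  have hJ2 := J_tendsto ht hyt 2 hbd2
  simp only [pow_zero, one_mul, pow_one] at hJ0 hJ1 hJ2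
  rw [show (∫ u : ℝ, Real.exp (-b * u ^ 2)) = L0 from rfl] at hJ0
  rw [integral_odd_gauss b] at hJ1
  rw [integral_sq_gauss hb, show ((2 : ℝ) * b)⁻¹ = t from by rw [hbdef]; field_simp,
    show (∫ u : ℝ, Real.exp (-b * u ^ 2)) = L0 from rfl] at hJ2
  -- ratios of the transformed integrals
  have hdiv1 : Tendsto (fun T : ℝ =>
      (∫ u : ℝ, u * Real.exp (-(b * u ^ 2) - 2 * max 0 (-(y - t + Real.sqrt T * u)) / T)) /
      (∫ u : ℝ, Real.exp (-(b * u ^ 2) - 2 * max 0 (-(y - t + Real.sqrt T * u)) / T)))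
      (nhdsWithin 0 (Set.Ioi 0)) (nhds (0 / L0)) := hJ1.div hJ0 hL0pos.ne'
  have hdiv2 : Tendsto (fun T : ℝ =>
      (∫ u : ℝ, u ^ 2 * Real.exp (-(b * u ^ 2) - 2 * max 0 (-(y - t + Real.sqrt T * u)) / T)) /
      (∫ u : ℝ, Real.exp (-(b * u ^ 2) - 2 * max 0 (-(y - t + Real.sqrt T * u)) / T)))
      (nhdsWithin 0 (Set.Ioi 0)) (nhds (t * L0 / L0)) := hJ2.div hJ0 hL0pos.ne'
  rw [zero_div] at hdiv1
  rw [mul_div_assoc, div_self hL0pos.ne', mul_one] at hdiv2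
  constructor
  · apply Tendsto.congr' _ hdiv1
    filter_upwards [self_mem_nhdsWithin] with T (hT : 0 < T)
    have hs : 0 < Real.sqrt T := Real.sqrt_pos.mpr hT
    have hE : (0 : ℝ) < Real.exp (-(obj1 y t (y - t)) / T) := Real.exp_pos _
    have e1 := key_eq ht hyt.le 1 hT
    have e0 := key_eq ht hyt.le 0 hT
    simp only [pow_one, pow_zero, one_mul] at e1 e0
    set J1 := ∫ u : ℝ, u * Real.exp (-(b * u ^ 2) - 2 * max 0 (-(y - t + Real.sqrt T * u)) / T)
    set J0 := ∫ u : ℝ, Real.exp (-(b * u ^ 2) - 2 * max 0 (-(y - t + Real.sqrt T * u)) / T)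
    rw [e1, e0]
    rw [show Real.sqrt T ^ (1 + 1) * Real.exp (-(obj1 y t (y - t)) / T) * J1
        = (Real.sqrt T * Real.exp (-(obj1 y t (y - t)) / T)) * (Real.sqrt T * J1) from by ring,
      show Real.sqrt T ^ (0 + 1) * Real.exp (-(obj1 y t (y - t)) / T) * J0
        = (Real.sqrt T * Real.exp (-(obj1 y t (y - t)) / T)) * J0 from by ring,
      mul_div_mul_left _ _ (by positivity), mul_div_assoc, ← mul_assoc, one_div,
      inv_mul_cancel₀ hs.ne', one_mul]
  · apply Tendsto.congr' _ hdiv2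
    filter_upwards [self_mem_nhdsWithin] with T (hT : 0 < T)
    have hs : 0 < Real.sqrt T := Real.sqrt_pos.mpr hT
    have hs2 : Real.sqrt T ^ 2 = T := Real.sq_sqrt hT.le
    have hE : (0 : ℝ) < Real.exp (-(obj1 y t (y - t)) / T) := Real.exp_pos _
    have e2 := key_eq ht hyt.le 2 hT
    have e0 := key_eq ht hyt.le 0 hT
    simp only [pow_zero, one_mul] at e2 e0
    set J2 := ∫ u : ℝ, u ^ 2 * Real.exp (-(b * u ^ 2) - 2 * max 0 (-(y - t + Real.sqrt T * u)) / T)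
    set J0 := ∫ u : ℝ, Real.exp (-(b * u ^ 2) - 2 * max 0 (-(y - t + Real.sqrt T * u)) / T)
    rw [e2, e0]
    rw [show Real.sqrt T ^ (2 + 1) * Real.exp (-(obj1 y t (y - t)) / T) * J2
        = (Real.sqrt T * Real.exp (-(obj1 y t (y - t)) / T)) * (Real.sqrt T ^ 2 * J2) from by ring,
      show Real.sqrt T ^ (0 + 1) * Real.exp (-(obj1 y t (y - t)) / T) * J0
        = (Real.sqrt T * Real.exp (-(obj1 y t (y - t)) / T)) * J0 from by ring,
      mul_div_mul_left _ _ (by positivity), hs2, mul_div_assoc, ← mul_assoc, one_div,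
      inv_mul_cancel₀ hT.ne', one_mul]
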